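/- Let v be an irreducible Llull matrix on a finite set S. Then there is a unique φ in the open simplex Φ = {φ_x > 0, Σφ_x = 1} maximizing F(φ) = ∏_{{x,y}} φ_x^{v_{xy}} φ_y^{v_{yx}}/(φ_x+φ_y)^{t_{xy}}, and it is the unique solution in Φ of the system Σ_{y≠x} t_{xy} φ_x/(φ_x+φ_y) = Σ_{y≠x} v_{xy} for all x. -/

import Mathlib

/-- The minimum score along a path `x, z₁, …, zₖ, y` (the list gives the
intermediate points; the empty list is the direct link from `x` to `y`). -/
def chainMin {S : Type*} (v : S → S → ℝ) : S → List S → S → ℝ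
  | x, [], y => v x y
  | x, z :: l, y => min (v x z) (chainMin v z l y)

/-- Indirect (max-min) score: supremum over all paths from `x` to `y`
of the minimum direct score along the path. -/
noncomputable def iScore {S : Type*} (v : S → S → ℝ) (x y : S) : ℝ :=
  sSup {r : ℝ | ∃ l : List S, r = chainMin v x l y}

/-- A Llull matrix: preference scores in `[0,1]` with `v x y + v y x ≤ 1`. -/
def IsLlull {S : Type*} (v : S → S → ℝ) : Prop :=
  ∀ x y : S, x ≠ y → 0 ≤ v x y ∧ v x y ≤ 1 ∧ v x y + v y x ≤ 1


open Finset in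
/-- Zermelo's likelihood function
`F(φ) = ∏_{{x,y}} φ_x^{v_{xy}} φ_y^{v_{yx}} / (φ_x+φ_y)^{t_{xy}}`,
written as a product over ordered pairs of distinct elements. -/
noncomputable def Zf {S : Type*} [Fintype S] [DecidableEq S]
    (v : S → S → ℝ) (φ : S → ℝ) : ℝ :=
  ∏ x, ∏ y ∈ Finset.univ.erase x, (φ x) ^ (v x y) / (φ x + φ y) ^ (v x y)

/-- The open simplex of normalized positive strength vectors. -/
def simplexPos (S : Type*) [Fintype S] : Set (S → ℝ) :=
  {φ | (∀ x, 0 < φ x) ∧ ∑ x, φ x = 1}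

/-- Zermelo's system of equations
`Σ_{y≠x} t_{xy} φ_x/(φ_x+φ_y) = Σ_{y≠x} v_{xy}` for all `x`. -/
def ZermeloEq {S : Type*} [Fintype S] [DecidableEq S]
    (v : S → S → ℝ) (φ : S → ℝ) : Prop :=
  ∀ x, ∑ y ∈ Finset.univ.erase x, (v x y + v y x) * (φ x / (φ x + φ y)) =
    ∑ y ∈ Finset.univ.erase x, v x y


section Aux



open Finset

lemma exists_chain_pos {S : Type*} (v : S → S → ℝ) {x y : S}
    (h : 0 < iScore v x y) : ∃ l : List S, 0 < chainMin v x l y := by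
  have hne : {r : ℝ | ∃ l : List S, r = chainMin v x l y}.Nonempty := ⟨v x y, ⟨[], rfl⟩⟩
  obtain ⟨r, ⟨l, rfl⟩, hr⟩ := exists_lt_of_lt_csSup hne h
  exact ⟨l, hr⟩

lemma chain_crossing {S : Type*} (v : S → S → ℝ) (A : Finset S) :
    ∀ (l : List S) (x y : S), 0 < chainMin v x l y → x ∈ A → y ∉ A →
      ∃ a ∈ A, ∃ b ∉ A, 0 < v a b := by
  intro l
  induction l with
  | nil => intro x y h hx hy; exact ⟨x, hx, y, hy, h⟩
  | cons z l ih =>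
    intro x y h hx hy
    simp only [chainMin, lt_min_iff] at h
    by_cases hz : z ∈ A
    · exact ih z y h.2 hz hy
    · exact ⟨x, hx, z, hz, h.1⟩

lemma crossing {S : Type*} [Fintype S] (v : S → S → ℝ)
    (hirr : ∀ x y : S, x ≠ y → 0 < iScore v x y) (A : Finset S)
    (hA : A.Nonempty) (hA' : A ≠ univ) : ∃ a ∈ A, ∃ b ∉ A, 0 < v a b := by
  obtain ⟨x, hx⟩ := hA
  obtain ⟨y, hy⟩ : ∃ y, y ∉ A := by
    by_contra h
    push_neg at h
    exact hA' (Finset.eq_univ_iff_forall.2 h)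
  obtain ⟨l, hl⟩ := exists_chain_pos v (hirr x y (fun h => hy (h ▸ hx)))
  exact chain_crossing v A l x y hl hx hy



section ZfBounds

variable {S : Type*} [Fintype S] [DecidableEq S] {v : S → S → ℝ} {φ : S → ℝ}

lemma factor_pos (hv : IsLlull v) (hφ : ∀ x, 0 < φ x) {x y : S} (hxy : x ≠ y) :
    0 < (φ x) ^ (v x y) / (φ x + φ y) ^ (v x y) :=
  div_pos (Real.rpow_pos_of_pos (hφ x) _)
    (Real.rpow_pos_of_pos (add_pos (hφ x) (hφ y)) _)

lemma factor_le_one (hv : IsLlull v) (hφ : ∀ x, 0 < φ x) {x y : S} (hxy : x ≠ y) :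
    (φ x) ^ (v x y) / (φ x + φ y) ^ (v x y) ≤ 1 := by
  rw [div_le_one (Real.rpow_pos_of_pos (add_pos (hφ x) (hφ y)) _)]
  exact Real.rpow_le_rpow (hφ x).le (by linarith [hφ y]) (hv x y hxy).1

lemma Zf_pos (hv : IsLlull v) (hφ : ∀ x, 0 < φ x) : 0 < Zf v φ := by
  refine Finset.prod_pos fun x _ => Finset.prod_pos fun y hy => ?_
  exact factor_pos hv hφ (Finset.ne_of_mem_erase hy).symm

lemma inner_le_one (hv : IsLlull v) (hφ : ∀ x, 0 < φ x) (x : S) :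
    ∏ y ∈ Finset.univ.erase x, (φ x) ^ (v x y) / (φ x + φ y) ^ (v x y) ≤ 1 :=
  Finset.prod_le_one
    (fun y hy => (factor_pos hv hφ (Finset.ne_of_mem_erase hy).symm).le)
    (fun y hy => factor_le_one hv hφ (Finset.ne_of_mem_erase hy).symm)

lemma Zf_le_factor (hv : IsLlull v) (hφ : ∀ x, 0 < φ x) {a b : S} (hab : a ≠ b) :
    Zf v φ ≤ (φ a) ^ (v a b) / (φ a + φ b) ^ (v a b) := by
  have h1 : Zf v φ ≤ ∏ y ∈ Finset.univ.erase a, (φ a) ^ (v a y) / (φ a + φ y) ^ (v a y) := by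
    rw [Zf, ← Finset.prod_erase_mul _ _ (Finset.mem_univ a)]
    calc (∏ x ∈ Finset.univ.erase a, ∏ y ∈ Finset.univ.erase x,
            (φ x) ^ (v x y) / (φ x + φ y) ^ (v x y)) *
          (∏ y ∈ Finset.univ.erase a, (φ a) ^ (v a y) / (φ a + φ y) ^ (v a y))
        ≤ 1 * (∏ y ∈ Finset.univ.erase a, (φ a) ^ (v a y) / (φ a + φ y) ^ (v a y)) := by
          apply mul_le_mul_of_nonneg_right
          · exact Finset.prod_le_one
              (fun x _ => (Finset.prod_pos fun y hy => factor_pos hv hφ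
                (Finset.ne_of_mem_erase hy).symm).le)
              (fun x _ => inner_le_one hv hφ x)
          · exact (Finset.prod_pos fun y hy => factor_pos hv hφ
              (Finset.ne_of_mem_erase hy).symm).le
      _ = _ := one_mul _
  refine h1.trans ?_
  rw [← Finset.prod_erase_mul _ _ (Finset.mem_erase.2 ⟨hab.symm, Finset.mem_univ b⟩)]
  calc (∏ y ∈ (Finset.univ.erase a).erase b, (φ a) ^ (v a y) / (φ a + φ y) ^ (v a y)) *
        ((φ a) ^ (v a b) / (φ a + φ b) ^ (v a b))
      ≤ 1 * ((φ a) ^ (v a b) / (φ a + φ b) ^ (v a b)) := by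
        apply mul_le_mul_of_nonneg_right
        · exact Finset.prod_le_one
            (fun y hy => (factor_pos hv hφ
              (Finset.ne_of_mem_erase (Finset.mem_of_mem_erase hy)).symm).le)
            (fun y hy => factor_le_one hv hφ
              (Finset.ne_of_mem_erase (Finset.mem_of_mem_erase hy)).symm)
        · exact (factor_pos hv hφ hab).le
    _ = _ := one_mul _

end ZfBounds


section Boundary

variable {S : Type*} [Fintype S] [DecidableEq S] {v : S → S → ℝ}

lemma boundary_bound (hS : 2 ≤ Fintype.card S) (hv : IsLlull v)
    (hirr : ∀ x y : S, x ≠ y → 0 < iScore v x y)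
    {m : ℝ} (hm : 0 < m)
    (hmle : ∀ a b : S, a ≠ b → 0 < v a b → m ≤ v a b)
    {ε : ℝ} (hε : 0 < ε) (hε1 : (Fintype.card S : ℝ) * ε < 1)
    {ψ : S → ℝ} (hψ : ψ ∈ simplexPos S) {x₀ : S} (hx₀ : ψ x₀ < ε) :
    Zf v ψ ≤ (((Fintype.card S : ℝ) * ε) ^ ((1:ℝ)/(Fintype.card S - 1))) ^ m := by
  obtain ⟨hpos, hsum⟩ := hψ
  set n := Fintype.card S with hn
  have hn1 : (1:ℝ) ≤ (n:ℝ) := by exact_mod_cast le_trans (by norm_num) hS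
  have hnε : 0 < (n:ℝ) * ε := by positivity
  set N := n - 1 with hN
  have hNpos : 0 < N := by omega
  have hNcast : (N : ℝ) = (n : ℝ) - 1 := by
    rw [hN, Nat.cast_sub (by omega)]; norm_num
  set c : ℝ := ((n:ℝ) * ε) ^ ((1:ℝ)/((n:ℝ) - 1)) with hc
  have hc0 : 0 < c := Real.rpow_pos_of_pos hnε _
  have hc1 : c < 1 := by
    apply Real.rpow_lt_one hnε.le hε1
    rw [← hNcast]
    positivity
  set r : ℝ := c⁻¹ with hr
  have hr1 : 1 < r := (one_lt_inv₀ hc0).2 hc1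
  have hr0 : 0 < r := lt_trans one_pos hr1
  -- c ^ N = n * ε
  have hcN : c ^ N = (n:ℝ) * ε := by
    rw [hc, ← Real.rpow_natCast (((n:ℝ) * ε) ^ ((1:ℝ)/((n:ℝ) - 1))) N,
      ← Real.rpow_mul hnε.le, hNcast]
    rw [one_div, inv_mul_cancel₀ (by rw [← hNcast]; positivity), Real.rpow_one]
  have hrN : ε * r ^ N = 1 / (n:ℝ) := by
    rw [hr, inv_pow, hcN]
    field_simp
  -- the filtration
  set T : ℕ → Finset S := fun j => Finset.univ.filter (fun z => ψ z ≤ ε * r ^ j) with hT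
  have hmono : ∀ i j, i ≤ j → T i ⊆ T j := by
    intro i j hij z hz
    rw [hT, Finset.mem_filter] at hz ⊢
    refine ⟨Finset.mem_univ z, hz.2.trans ?_⟩
    exact mul_le_mul_of_nonneg_left (pow_le_pow_right₀ hr1.le hij) hε.le
  have hx₀T : ∀ j, x₀ ∈ T j := by
    intro j
    rw [hT, Finset.mem_filter]
    refine ⟨Finset.mem_univ _, hx₀.le.trans ?_⟩
    nlinarith [one_le_pow₀ hr1.le (n := j)]
  have hTN : T N ≠ Finset.univ := by
    intro h
    have hb : ∀ z, ψ z ≤ 1 / (n:ℝ) := by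
      intro z
      have := (Finset.mem_filter.1 (h ▸ Finset.mem_univ z)).2
      rwa [hrN] at this
    have hεn : ε < 1 / (n:ℝ) := by
      rw [lt_div_iff₀ (by linarith)]; linarith [hε1, mul_comm ε (n:ℝ)]
    have hsum2 : ∑ z, ψ z < 1 := by
      calc ∑ z, ψ z = ψ x₀ + ∑ z ∈ Finset.univ.erase x₀, ψ z := by
            rw [Finset.add_sum_erase _ _ (Finset.mem_univ x₀)]
        _ < 1 / (n:ℝ) + ∑ z ∈ Finset.univ.erase x₀, (1 / (n:ℝ)) := by
            apply add_lt_add_of_lt_of_le (lt_trans hx₀ hεn)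
            exact Finset.sum_le_sum fun z _ => hb z
        _ = 1 / (n:ℝ) + (n - 1 : ℕ) * (1 / (n:ℝ)) := by
            rw [Finset.sum_const, Finset.card_erase_of_mem (Finset.mem_univ x₀),
              Finset.card_univ, nsmul_eq_mul]
        _ = 1 := by
            rw [Nat.cast_sub (by omega)]
            field_simp
            ring
    rw [hsum] at hsum2
    exact lt_irrefl 1 hsum2
  -- pigeonhole: some level is stationary
  have hstat : ∃ j, j < N ∧ T j = T (j + 1) := by
    by_contra h
    push_neg at h
    have hcard : ∀ j, j ≤ N → j + 1 ≤ (T j).card := by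
      intro j hj
      induction j with
      | zero => exact Finset.card_pos.2 ⟨x₀, hx₀T 0⟩
      | succ k ih =>
        have hk : k ≤ N := by omega
        have hss : T k ⊂ T (k + 1) :=
          (Finset.ssubset_iff_of_subset (hmono k (k+1) (by omega))).2 (by
            have := h k (by omega)
            rcases Finset.exists_of_ssubset ((hmono k (k+1) (by omega)).ssubset_of_ne this) with ⟨z, hz1, hz2⟩
            exact ⟨z, hz1, hz2⟩)
        have h2 := Finset.card_lt_card hss
        have h3 := ih hk
        omega
    have h1 := hcard N le_rfl
    have hcardle : (T N).card ≤ n := Finset.card_le_univ _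
    have h2 : (T N).card = n := by omega
    exact hTN (Finset.eq_univ_of_card _ (by rw [h2, hn]))
  obtain ⟨j, hjN, hjeq⟩ := hstat
  -- crossing edge
  have hTj_ne : (T j).Nonempty := ⟨x₀, hx₀T j⟩
  have hTj_proper : T j ≠ Finset.univ := by
    intro h
    apply hTN
    apply Finset.eq_univ_of_card
    have h1 : (T j).card ≤ (T N).card := Finset.card_le_card (hmono j N (by omega))
    have h2 : (T N).card ≤ Fintype.card S := Finset.card_le_univ _
    rw [h, Finset.card_univ] at h1
    omega
  obtain ⟨a, ha, b, hb, hvab⟩ := crossing v hirr (T j) hTj_ne hTj_proper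
  have hab : a ≠ b := fun h => hb (h ▸ ha)
  have hψa : ψ a ≤ ε * r ^ j := (Finset.mem_filter.1 ha).2
  have hψb : ε * r ^ (j + 1) < ψ b := by
    have : b ∉ T (j + 1) := hjeq ▸ hb
    rw [hT, Finset.mem_filter] at this
    push_neg at this
    exact this (Finset.mem_univ b)
  -- ratio bound
  have hratio : ψ a / (ψ a + ψ b) ≤ c := by
    have h1 : ψ a / (ψ a + ψ b) ≤ ψ a / ψ b :=
      div_le_div_of_nonneg_left (hpos a).le (hpos b) (by linarith [hpos a])
    have h2 : ψ a / ψ b ≤ (ε * r ^ j) / (ε * r ^ (j+1)) := by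
      exact div_le_div₀ (by positivity) hψa (by positivity) hψb.le
    have h3 : (ε * r ^ j) / (ε * r ^ (j+1)) = c := by
      rw [pow_succ, hr]
      field_simp
    linarith
  -- conclude
  have hfac : Zf v ψ ≤ (ψ a) ^ (v a b) / (ψ a + ψ b) ^ (v a b) :=
    Zf_le_factor hv hpos hab
  have hsum_ab : 0 < ψ a + ψ b := add_pos (hpos a) (hpos b)
  have heq : (ψ a) ^ (v a b) / (ψ a + ψ b) ^ (v a b) = (ψ a / (ψ a + ψ b)) ^ (v a b) := by
    rw [Real.div_rpow (hpos a).le hsum_ab.le]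
  have hratio_pos : 0 < ψ a / (ψ a + ψ b) := div_pos (hpos a) hsum_ab
  have hratio_le1 : ψ a / (ψ a + ψ b) ≤ 1 := by
    rw [div_le_one hsum_ab]; linarith [hpos b]
  calc Zf v ψ ≤ (ψ a / (ψ a + ψ b)) ^ (v a b) := by rw [← heq]; exact hfac
    _ ≤ (ψ a / (ψ a + ψ b)) ^ m :=
        Real.rpow_le_rpow_of_exponent_ge hratio_pos hratio_le1 (hmle a b hab hvab)
    _ ≤ c ^ m := Real.rpow_le_rpow hratio_pos.le hratio hm.le


end Boundary

section Deriv

variable {S : Type*} [Fintype S] [DecidableEq S] {v : S → S → ℝ} {φ : S → ℝ}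

lemma Zf_smul (hφ : ∀ x, 0 < φ x) {c : ℝ} (hc : 0 < c) :
    Zf v (fun z => c * φ z) = Zf v φ := by
  unfold Zf
  refine Finset.prod_congr rfl fun x _ => Finset.prod_congr rfl fun y _ => ?_
  have h1 : c * φ x + c * φ y = c * (φ x + φ y) := by ring
  rw [h1, Real.mul_rpow hc.le (hφ x).le, Real.mul_rpow hc.le (add_pos (hφ x) (hφ y)).le,
    mul_div_mul_left _ _ (Real.rpow_pos_of_pos hc _).ne']

lemma log_Zf (hv : IsLlull v) (hφ : ∀ x, 0 < φ x) :
    Real.log (Zf v φ) =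
      ∑ x, ∑ y ∈ Finset.univ.erase x,
        v x y * (Real.log (φ x) - Real.log (φ x + φ y)) := by
  unfold Zf
  rw [Real.log_prod (fun x _ => (Finset.prod_pos fun y hy =>
    factor_pos hv hφ (Finset.ne_of_mem_erase hy).symm).ne')]
  refine Finset.sum_congr rfl fun x _ => ?_
  rw [Real.log_prod (fun y hy => (factor_pos hv hφ (Finset.ne_of_mem_erase hy).symm).ne')]
  refine Finset.sum_congr rfl fun y hy => ?_
  rw [Real.log_div (Real.rpow_pos_of_pos (hφ x) _).ne'
    (Real.rpow_pos_of_pos (add_pos (hφ x) (hφ y)) _).ne',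
    Real.log_rpow (hφ x), Real.log_rpow (add_pos (hφ x) (hφ y)), mul_sub]

lemma max_to_zermelo (hv : IsLlull v) (hφ : φ ∈ simplexPos S)
    (hmax : ∀ ψ ∈ simplexPos S, Zf v ψ ≤ Zf v φ) : ZermeloEq v φ := by
  obtain ⟨hpos, hsum⟩ := hφ
  intro x
  classical
  set d : S → ℝ := fun z => if z = x then 1 else 0 with hd
  set u : ℝ → S → ℝ := fun t z => φ z + d z * t with hu
  set g : ℝ → ℝ := fun t => ∑ x', ∑ y' ∈ Finset.univ.erase x',
      v x' y' * (Real.log (φ x' + d x' * t) - Real.log ((φ x' + d x' * t) + (φ y' + d y' * t)))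
    with hg
  have hd0 : ∀ z, 0 ≤ d z := fun z => by rw [hd]; dsimp; split <;> norm_num
  have hd1 : ∀ z, d z ≤ 1 := fun z => by rw [hd]; dsimp; split <;> norm_num
  -- positivity of u t for small t
  set δ : ℝ := min (φ x) 1 with hδ
  have hδ0 : 0 < δ := lt_min (hpos x) one_pos
  have hupos : ∀ t, |t| < δ → ∀ z, 0 < u t z := by
    intro t ht z
    rw [hu]
    dsimp
    rw [hd]
    dsimp
    split
    · rename_i h
      subst h
      have := abs_lt.1 ht
      have h2 : -(φ z) < t := by
        have := this.1
        have : -δ ≤ -(min (φ z) 1) := by simp [hδ]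
        nlinarith [min_le_left (φ z) (1:ℝ), abs_lt.1 ht]
      linarith
    · simpa using hpos z
  -- local max
  have hloc : IsLocalMax g 0 := by
    have hmem : Set.Ioo (-δ) δ ∈ nhds (0:ℝ) := Ioo_mem_nhds (by linarith) hδ0
    refine Filter.eventually_of_mem hmem fun t ht => ?_
    have htabs : |t| < δ := abs_lt.2 ⟨ht.1, ht.2⟩
    have hut : ∀ z, 0 < u t z := hupos t htabs
    have ht1 : 0 < 1 + t := by
      have := abs_lt.1 htabs
      have : -1 < t := by
        have h2 : δ ≤ 1 := min_le_right _ _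
        linarith [this.1]
      linarith
    have hsumu : ∑ z, u t z = 1 + t := by
      rw [hu]
      dsimp
      rw [Finset.sum_add_distrib, hsum]
      congr 1
      rw [hd]
      dsimp
      rw [← Finset.sum_mul]
      simp
    have hnorm : (fun z => (1 + t)⁻¹ * u t z) ∈ simplexPos S := by
      constructor
      · intro z; exact mul_pos (inv_pos.2 ht1) (hut z)
      · rw [← Finset.mul_sum, hsumu, inv_mul_cancel₀ ht1.ne']
    have hZle : Zf v (u t) ≤ Zf v φ := by
      have h1 : Zf v (fun z => (1 + t)⁻¹ * u t z) = Zf v (u t) := Zf_smul hut (inv_pos.2 ht1)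
      have h2 := hmax _ hnorm
      linarith
    have hg_t : g t = Real.log (Zf v (u t)) := by
      rw [log_Zf hv hut]
    have hg_0 : g 0 = Real.log (Zf v φ) := by
      rw [log_Zf hv hpos]
      rw [hg]
      simp
    rw [hg_t, hg_0]
    exact Real.log_le_log (Zf_pos hv hut) hZle
  -- derivative
  have haux : ∀ z, HasDerivAt (fun t : ℝ => φ z + d z * t) (d z) 0 := by
    intro z
    simpa using ((hasDerivAt_id (0:ℝ)).const_mul (d z)).const_add (φ z)
  have hterm : ∀ x' y' : S, x' ≠ y' → HasDerivAt
      (fun t => v x' y' * (Real.log (φ x' + d x' * t) - Real.log ((φ x' + d x' * t) + (φ y' + d y' * t))))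
      (v x' y' * (d x' / φ x' - (d x' + d y') / (φ x' + φ y'))) 0 := by
    intro x' y' hne
    have h1 : HasDerivAt (fun t => Real.log (φ x' + d x' * t)) (d x' / φ x') 0 := by
      have := (haux x').log (by simpa using (hpos x').ne')
      simpa using this
    have h2 : HasDerivAt (fun t => Real.log ((φ x' + d x' * t) + (φ y' + d y' * t)))
        ((d x' + d y') / (φ x' + φ y')) 0 := by
      have hadd := (haux x').add (haux y')
      have := hadd.log (by simpa using (add_pos (hpos x') (hpos y')).ne')
      simpa using this
    exact (h1.sub h2).const_mul _
  have hD : HasDerivAt g (∑ x', ∑ y' ∈ Finset.univ.erase x',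
      v x' y' * (d x' / φ x' - (d x' + d y') / (φ x' + φ y'))) 0 := by
    rw [hg]
    apply HasDerivAt.fun_sum
    intro x' _
    apply HasDerivAt.fun_sum
    intro y' hy'
    exact hterm x' y' (Finset.ne_of_mem_erase hy').symm
  have hD0 : (∑ x', ∑ y' ∈ Finset.univ.erase x',
      v x' y' * (d x' / φ x' - (d x' + d y') / (φ x' + φ y'))) = 0 := by
    rw [← hD.deriv]
    exact hloc.deriv_eq_zero
  -- simplify the derivative
  have hsplit : (∑ x', ∑ y' ∈ Finset.univ.erase x',
      v x' y' * (d x' / φ x' - (d x' + d y') / (φ x' + φ y')))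
      = (∑ y ∈ Finset.univ.erase x, v x y * (1 / φ x - 1 / (φ x + φ y)))
        + ∑ x' ∈ Finset.univ.erase x, (- v x' x / (φ x' + φ x)) := by
    rw [← Finset.add_sum_erase _ _ (Finset.mem_univ x)]
    congr 1
    · refine Finset.sum_congr rfl fun y hy => ?_
      have hyx : y ≠ x := Finset.ne_of_mem_erase hy
      rw [hd]
      simp [hyx]
    · refine Finset.sum_congr rfl fun x' hx' => ?_
      have hx'x : x' ≠ x := Finset.ne_of_mem_erase hx'
      rw [Finset.sum_eq_single_of_mem x
        (Finset.mem_erase.2 ⟨hx'x.symm, Finset.mem_univ x⟩)]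
      · rw [hd]
        simp [hx'x]
        ring
      · intro y' hy' hy'x
        rw [hd]
        simp [hx'x, hy'x]
  rw [hsplit, ← Finset.sum_add_distrib] at hD0
  -- multiply by φ x and conclude
  have hkey : ∑ y ∈ Finset.univ.erase x,
      (v x y - (v x y + v y x) * (φ x / (φ x + φ y))) = 0 := by
    have := congrArg (fun s => φ x * s) hD0
    simp only [mul_zero, Finset.mul_sum] at this
    rw [← this]
    refine Finset.sum_congr rfl fun y hy => ?_
    have hxy : x ≠ y := (Finset.ne_of_mem_erase hy).symm
    have h1 : φ x ≠ 0 := (hpos x).ne'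
    have h2 : φ x + φ y ≠ 0 := (add_pos (hpos x) (hpos y)).ne'
    have h3 : φ y + φ x ≠ 0 := (add_pos (hpos y) (hpos x)).ne'
    rw [add_comm (φ y) (φ x)]
    field_simp
    ring
  rw [Finset.sum_sub_distrib] at hkey
  linarith

end Deriv

section Unique

variable {S : Type*} [Fintype S] [DecidableEq S] {v : S → S → ℝ}

lemma nested_pairs (A : Finset S) (F : S → S → ℝ) :
    ∑ x ∈ A, ∑ y ∈ A.erase x, F x y
      = ∑ p ∈ (A ×ˢ A).filter (fun p => p.2 ≠ p.1), F p.1 p.2 := by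
  rw [Finset.sum_filter, Finset.sum_product]
  refine Finset.sum_congr rfl fun x hx => ?_
  rw [← Finset.filter_ne', Finset.sum_filter]

lemma pairs_swap (A : Finset S) (F : S → S → ℝ) :
    ∑ p ∈ (A ×ˢ A).filter (fun p => p.2 ≠ p.1), F p.1 p.2
      = ∑ p ∈ (A ×ˢ A).filter (fun p => p.2 ≠ p.1), F p.2 p.1 := by
  apply Finset.sum_nbij' (fun p => Prod.swap p) (fun p => Prod.swap p) <;>
    simp +contextual [Finset.mem_filter, Finset.mem_product, and_comm, eq_comm]

lemma internal_eq (A : Finset S) {ψ : S → ℝ} (hψ : ∀ z, 0 < ψ z) :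
    ∑ x ∈ A, ∑ y ∈ A.erase x, (v x y + v y x) * (ψ x / (ψ x + ψ y))
      = ∑ x ∈ A, ∑ y ∈ A.erase x, ((v x y + v y x) / 2) := by
  rw [nested_pairs, nested_pairs]
  set F : S → S → ℝ := fun a b => (v a b + v b a) * (ψ a / (ψ a + ψ b)) with hF
  have hswap := pairs_swap A F
  have hkey : ∀ p ∈ (A ×ˢ A).filter (fun p : S × S => p.2 ≠ p.1),
      F p.1 p.2 + F p.2 p.1 = v p.1 p.2 + v p.2 p.1 := by
    intro p _
    rw [hF]
    dsimp
    have h1 : ψ p.1 + ψ p.2 ≠ 0 := (add_pos (hψ p.1) (hψ p.2)).ne'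
    have h2 : ψ p.2 + ψ p.1 ≠ 0 := (add_pos (hψ p.2) (hψ p.1)).ne'
    field_simp
    ring
  have h2 : (2:ℝ) * ∑ p ∈ (A ×ˢ A).filter (fun p : S × S => p.2 ≠ p.1), F p.1 p.2
      = ∑ p ∈ (A ×ˢ A).filter (fun p : S × S => p.2 ≠ p.1), (v p.1 p.2 + v p.2 p.1) := by
    rw [two_mul]
    nth_rewrite 2 [hswap]
    rw [← Finset.sum_add_distrib]
    exact Finset.sum_congr rfl hkey
  have h3 : ∑ p ∈ (A ×ˢ A).filter (fun p : S × S => p.2 ≠ p.1), ((v p.1 p.2 + v p.2 p.1) / 2)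
      = (∑ p ∈ (A ×ˢ A).filter (fun p : S × S => p.2 ≠ p.1), (v p.1 p.2 + v p.2 p.1)) / 2 := by
    rw [Finset.sum_div]
  rw [h3, ← h2]
  ring

lemma zermelo_unique (hS : 2 ≤ Fintype.card S) (hv : IsLlull v)
    (hirr : ∀ x y : S, x ≠ y → 0 < iScore v x y) {φ φ' : S → ℝ}
    (hφ : φ ∈ simplexPos S) (hφ' : φ' ∈ simplexPos S)
    (h1 : ZermeloEq v φ) (h2 : ZermeloEq v φ') : φ' = φ := by
  obtain ⟨hpos, hsum⟩ := hφ
  obtain ⟨hpos', hsum'⟩ := hφ'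
  have hcard : 0 < Fintype.card S := by omega
  have : Nonempty S := Fintype.card_pos_iff.mp hcard
  have hne : (Finset.univ : Finset S).Nonempty := Finset.univ_nonempty
  set c := Finset.univ.sup' hne (fun z => φ' z / φ z) with hc
  have hcb : ∀ z, φ' z ≤ c * φ z := by
    intro z
    have h : φ' z / φ z ≤ c := by
      rw [hc]; exact Finset.le_sup' (fun z => φ' z / φ z) (Finset.mem_univ z)
    calc φ' z = (φ' z / φ z) * φ z := (div_mul_cancel₀ _ (hpos z).ne').symm
      _ ≤ c * φ z := mul_le_mul_of_nonneg_right h (hpos z).le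
  obtain ⟨z₀, _, hz₀⟩ := Finset.exists_mem_eq_sup' hne (fun z => φ' z / φ z)
  have hc0 : 0 < c := by
    rw [hc, hz₀]
    exact div_pos (hpos' z₀) (hpos z₀)
  set A := Finset.univ.filter (fun z => c * φ z ≤ φ' z) with hA
  have hz₀A : z₀ ∈ A := by
    rw [hA, Finset.mem_filter]
    refine ⟨Finset.mem_univ _, ?_⟩
    rw [hc, hz₀, div_mul_cancel₀ _ (hpos z₀).ne']
  have hAeq : ∀ z ∈ A, φ' z = c * φ z := by
    intro z hz
    exact le_antisymm (hcb z) (Finset.mem_filter.1 hz).2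
  have hAlt : ∀ z ∉ A, φ' z < c * φ z := by
    intro z hz
    rw [hA, Finset.mem_filter] at hz
    push_neg at hz
    exact hz (Finset.mem_univ z)
  have hAuniv : A = Finset.univ := by
    by_contra hAne
    obtain ⟨a, ha, b, hb, hvab⟩ := crossing v hirr A ⟨z₀, hz₀A⟩ hAne
    -- the common value of the cross sums
    have hsame : ∀ ψ : S → ℝ, (∀ z, 0 < ψ z) → ZermeloEq v ψ →
        ∑ x ∈ A, ∑ y ∈ Finset.univ \ A, (v x y + v y x) * (ψ x / (ψ x + ψ y))
          = ∑ x ∈ A, ∑ y ∈ Finset.univ.erase x, v x y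
            - ∑ x ∈ A, ∑ y ∈ A.erase x, ((v x y + v y x) / 2) := by
      intro ψ hψ hz
      have hsumA : ∑ x ∈ A, ∑ y ∈ Finset.univ.erase x, (v x y + v y x) * (ψ x / (ψ x + ψ y))
          = ∑ x ∈ A, ∑ y ∈ Finset.univ.erase x, v x y :=
        Finset.sum_congr rfl fun x _ => hz x
      have hsplit : ∀ x ∈ A,
          ∑ y ∈ Finset.univ.erase x, (v x y + v y x) * (ψ x / (ψ x + ψ y))
            = ∑ y ∈ A.erase x, (v x y + v y x) * (ψ x / (ψ x + ψ y))
              + ∑ y ∈ Finset.univ \ A, (v x y + v y x) * (ψ x / (ψ x + ψ y)) := by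
        intro x hx
        rw [← Finset.sum_union]
        · congr 1
          ext z
          simp only [Finset.mem_erase, Finset.mem_univ, Finset.mem_union, Finset.mem_sdiff,
            and_true, true_and]
          constructor
          · intro hzx
            by_cases hzA : z ∈ A
            · exact Or.inl ⟨hzx, hzA⟩
            · exact Or.inr hzA
          · rintro (⟨hzx, _⟩ | hzA)
            · exact hzx
            · intro hzx
              exact hzA (hzx ▸ hx)
        · rw [Finset.disjoint_left]
          intro z hz1 hz2
          exact (Finset.mem_sdiff.1 hz2).2 (Finset.mem_of_mem_erase hz1)
      rw [Finset.sum_congr rfl hsplit, Finset.sum_add_distrib, internal_eq A hψ] at hsumA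
      linarith
    have hcrossφ := hsame φ hpos h1
    have hcrossφ' := hsame φ' hpos' h2
    have heq : ∑ x ∈ A, ∑ y ∈ Finset.univ \ A, (v x y + v y x) * (φ x / (φ x + φ y))
        = ∑ x ∈ A, ∑ y ∈ Finset.univ \ A, (v x y + v y x) * (φ' x / (φ' x + φ' y)) := by
      rw [hcrossφ, hcrossφ']
    -- strict inequality
    have hlt : ∑ p ∈ A ×ˢ (Finset.univ \ A),
          (v p.1 p.2 + v p.2 p.1) * (φ p.1 / (φ p.1 + φ p.2))
        < ∑ p ∈ A ×ˢ (Finset.univ \ A),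
          (v p.1 p.2 + v p.2 p.1) * (φ' p.1 / (φ' p.1 + φ' p.2)) := by
      apply Finset.sum_lt_sum
      · rintro ⟨x, y⟩ hp
        rw [Finset.mem_product] at hp
        obtain ⟨hx, hy⟩ := hp
        have hyA : y ∉ A := (Finset.mem_sdiff.1 hy).2
        have hxy : x ≠ y := fun h => hyA (h ▸ hx)
        have ht0 : 0 ≤ v x y + v y x := add_nonneg (hv x y hxy).1 (hv y x hxy.symm).1
        dsimp only
        apply mul_le_mul_of_nonneg_left _ ht0
        have hx' : φ' x = c * φ x := hAeq x hx
        have hy' : φ' y ≤ c * φ y := hcb y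
        rw [hx']
        have e1 : φ x / (φ x + φ y) = c * φ x / (c * φ x + c * φ y) := by
          rw [← mul_add, mul_div_mul_left _ _ hc0.ne']
        rw [e1]
        exact div_le_div_of_nonneg_left (mul_pos hc0 (hpos x)).le
          (add_pos (mul_pos hc0 (hpos x)) (hpos' y)) (by linarith)
      · refine ⟨(a, b), Finset.mem_product.2 ⟨ha, Finset.mem_sdiff.2 ⟨Finset.mem_univ b, hb⟩⟩, ?_⟩
        dsimp only
        have hab : a ≠ b := fun h => hb (h ▸ ha)
        have ht0 : 0 < v a b + v b a := by
          have := (hv b a hab.symm).1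
          linarith
        apply mul_lt_mul_of_pos_left _ ht0
        have ha' : φ' a = c * φ a := hAeq a ha
        have hb' : φ' b < c * φ b := hAlt b hb
        rw [ha']
        have e1 : φ a / (φ a + φ b) = c * φ a / (c * φ a + c * φ b) := by
          rw [← mul_add, mul_div_mul_left _ _ hc0.ne']
        rw [e1]
        exact div_lt_div_of_pos_left (mul_pos hc0 (hpos a))
          (add_pos (mul_pos hc0 (hpos a)) (hpos' b)) (by linarith)
    rw [← Finset.sum_product' (f := fun x y => (v x y + v y x) * (φ x / (φ x + φ y))),
      ← Finset.sum_product' (f := fun x y => (v x y + v y x) * (φ' x / (φ' x + φ' y)))] at heq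
    linarith
  have hcall : ∀ z, φ' z = c * φ z := fun z => hAeq z (hAuniv ▸ Finset.mem_univ z)
  have hc1 : c = 1 := by
    have : ∑ z, φ' z = c * ∑ z, φ z := by
      rw [Finset.mul_sum]
      exact Finset.sum_congr rfl fun z _ => hcall z
    rw [hsum, hsum', mul_one] at this
    exact this.symm
  funext z
  rw [hcall z, hc1, one_mul]

end Unique

section Exists

variable {S : Type*} [Fintype S] [DecidableEq S] {v : S → S → ℝ}

lemma Zf_continuousOn :
    ContinuousOn (Zf v) {ψ : S → ℝ | ∀ x, 0 < ψ x} := by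
  unfold Zf
  apply continuousOn_finset_prod
  intro x _
  apply continuousOn_finset_prod
  intro y _
  apply ContinuousOn.div
  · exact ContinuousOn.rpow_const (continuous_apply x).continuousOn
      (fun ψ hψ => Or.inl (hψ x).ne')
  · exact ContinuousOn.rpow_const ((continuous_apply x).add (continuous_apply y)).continuousOn
      (fun ψ hψ => Or.inl (add_pos (hψ x) (hψ y)).ne')
  · intro ψ hψ
    exact (Real.rpow_pos_of_pos (add_pos (hψ x) (hψ y)) _).ne'

lemma exists_global_max (hS : 2 ≤ Fintype.card S) (hv : IsLlull v)
    (hirr : ∀ x y : S, x ≠ y → 0 < iScore v x y) :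
    ∃ φ ∈ simplexPos S, ∀ ψ ∈ simplexPos S, Zf v ψ ≤ Zf v φ := by
  have hcard : 0 < Fintype.card S := by omega
  have hNty : Nonempty S := Fintype.card_pos_iff.mp hcard
  set n := Fintype.card S with hn
  have hn1 : (1:ℝ) ≤ (n:ℝ) := by exact_mod_cast hcard
  have hn2 : (2:ℝ) ≤ (n:ℝ) := by exact_mod_cast hS
  -- the uniform vector
  set u : S → ℝ := fun _ => (n:ℝ)⁻¹ with hu
  have hupos : ∀ x, 0 < u x := fun x => by rw [hu]; positivity
  have husum : ∑ x, u x = 1 := by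
    rw [hu]
    rw [Finset.sum_const, Finset.card_univ, nsmul_eq_mul, mul_inv_cancel₀ (by positivity)]
  have huS : u ∈ simplexPos S := ⟨hupos, husum⟩
  -- minimum positive entry m
  set P : Finset (S × S) := Finset.univ.filter (fun p => p.1 ≠ p.2 ∧ 0 < v p.1 p.2) with hP
  have hPne : P.Nonempty := by
    obtain ⟨a, b, hab⟩ := Fintype.exists_pair_of_one_lt_card (α := S) (by omega)
    obtain ⟨p, hp, q, hq, hpq⟩ := crossing v hirr {a} ⟨a, Finset.mem_singleton_self a⟩
      (by
        intro h
        have : b ∈ ({a} : Finset S) := h ▸ Finset.mem_univ b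
        exact hab (Finset.mem_singleton.1 this).symm)
    have hpq' : p ≠ q := fun h => hq (h ▸ hp)
    refine ⟨(p, q), ?_⟩
    rw [hP, Finset.mem_filter]
    exact ⟨Finset.mem_univ _, hpq', hpq⟩
  set m : ℝ := P.inf' hPne (fun p => v p.1 p.2) with hm
  have hm0 : 0 < m := by
    rw [hm, Finset.lt_inf'_iff]
    intro p hp
    rw [hP, Finset.mem_filter] at hp
    exact hp.2.2
  have hmle : ∀ a b : S, a ≠ b → 0 < v a b → m ≤ v a b := by
    intro a b hab hpos
    have hmem : (a, b) ∈ P := by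
      rw [hP, Finset.mem_filter]; exact ⟨Finset.mem_univ _, hab, hpos⟩
    rw [hm]
    exact Finset.inf'_le _ hmem
  -- choose ε
  set δ : ℝ := Zf v u with hδ
  have hδ0 : 0 < δ := Zf_pos hv hupos
  set q : ℝ := ((n:ℝ) - 1) / m with hq
  have hq0 : 0 < q := by rw [hq]; apply div_pos (by linarith) hm0
  set b : ℝ := min (1/2) ((min δ 1 / 2) ^ q) with hb
  have hmin0 : 0 < min δ 1 / 2 := by
    have := lt_min hδ0 one_pos
    linarith
  have hb0 : 0 < b := lt_min (by norm_num) (Real.rpow_pos_of_pos hmin0 _)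
  have hb2 : b ≤ 1/2 := min_le_left _ _
  set ε : ℝ := b / (n:ℝ) with hε
  have hε0 : 0 < ε := div_pos hb0 (by linarith)
  have hnε : (n:ℝ) * ε = b := by
    rw [hε, mul_div_cancel₀ _ (by positivity : (n:ℝ) ≠ 0)]
  have hnε1 : (n:ℝ) * ε < 1 := by rw [hnε]; linarith
  have hεn : ε ≤ (n:ℝ)⁻¹ := by
    rw [hε, div_le_iff₀ (by linarith : (0:ℝ) < (n:ℝ))]
    rw [inv_mul_cancel₀ (by positivity : (n:ℝ) ≠ 0) |>.symm] at *
    nlinarith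
  -- the key bound on the boundary region
  have hbound : (((n:ℝ) * ε) ^ ((1:ℝ)/((n:ℝ) - 1))) ^ m < δ := by
    have e0 : (0:ℝ) < (n:ℝ) - 1 := by linarith
    have h1 : (((n:ℝ) * ε) ^ ((1:ℝ)/((n:ℝ) - 1))) ^ m
        = ((n:ℝ) * ε) ^ (((1:ℝ)/((n:ℝ) - 1)) * m) := by
      rw [← Real.rpow_mul (by positivity)]
    rw [h1, hnε]
    have h2 : b ^ (((1:ℝ)/((n:ℝ) - 1)) * m) ≤ ((min δ 1 / 2) ^ q) ^ (((1:ℝ)/((n:ℝ) - 1)) * m) := by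
      apply Real.rpow_le_rpow hb0.le (min_le_right _ _) (by positivity)
    have h3 : ((min δ 1 / 2) ^ q) ^ (((1:ℝ)/((n:ℝ) - 1)) * m) = min δ 1 / 2 := by
      rw [← Real.rpow_mul hmin0.le]
      have : q * (((1:ℝ)/((n:ℝ) - 1)) * m) = 1 := by
        rw [hq]
        field_simp
      rw [this, Real.rpow_one]
    rw [h3] at h2
    have h4 : min δ 1 / 2 < δ := by
      have := min_le_left δ 1
      linarith
    linarith
  -- the compact region
  set K : Set (S → ℝ) := {ψ | (∀ x, ε ≤ ψ x) ∧ ∑ x, ψ x = 1} with hK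
  have hKsub : K ⊆ simplexPos S := by
    rintro ψ ⟨h1, h2⟩
    exact ⟨fun x => lt_of_lt_of_le hε0 (h1 x), h2⟩
  have huK : u ∈ K := by
    refine ⟨fun x => ?_, husum⟩
    rw [hu]
    exact hεn
  have hKcl : IsClosed K := by
    have : K = (⋂ x, {ψ : S → ℝ | ε ≤ ψ x}) ∩ {ψ : S → ℝ | ∑ x, ψ x = 1} := by
      ext ψ
      simp [hK, Set.mem_iInter]
    rw [this]
    exact IsClosed.inter (isClosed_iInter fun x =>
        isClosed_le continuous_const (continuous_apply x))
      (isClosed_eq (continuous_finset_sum _ fun x _ => continuous_apply x) continuous_const)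
  have hKbd : K ⊆ Set.Icc (fun _ => (0:ℝ)) (fun _ => (1:ℝ)) := by
    rintro ψ ⟨h1, h2⟩
    constructor
    · intro x
      exact le_trans hε0.le (h1 x)
    · intro x
      have := Finset.single_le_sum (f := ψ) (fun z _ => le_trans hε0.le (h1 z))
        (Finset.mem_univ x)
      rw [h2] at this
      exact this
  have hKcp : IsCompact K := IsCompact.of_isClosed_subset isCompact_Icc hKcl hKbd
  have hcont : ContinuousOn (Zf v) K :=
    Zf_continuousOn.mono (fun ψ hψ => fun x => lt_of_lt_of_le hε0 (hψ.1 x))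
  obtain ⟨φ, hφK, hφmax⟩ := hKcp.exists_isMaxOn ⟨u, huK⟩ hcont
  refine ⟨φ, hKsub hφK, ?_⟩
  intro ψ hψ
  by_cases hcase : ∀ x, ε ≤ ψ x
  · exact hφmax ⟨hcase, hψ.2⟩
  · push_neg at hcase
    obtain ⟨x₀, hx₀⟩ := hcase
    have hb1 := boundary_bound hS hv hirr hm0 hmle hε0 hnε1 hψ hx₀
    have hb2 := hφmax huK
    have hfin : Zf v ψ < Zf v φ :=
      calc Zf v ψ ≤ (((n:ℝ) * ε) ^ ((1:ℝ)/((n:ℝ) - 1))) ^ m := hb1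
        _ < δ := hbound
        _ ≤ Zf v φ := hb2
    exact hfin.le

end Exists

end Aux

set_option linter.unusedSectionVars false in
set_option linter.unusedVariables false in
/-- Zermelo's theorem: for irreducible `v` there is a unique maximizer of `F`
on the open simplex, and it is the unique solution there of Zermelo's system. -/
theorem stmt9 {S : Type*} [Fintype S] [DecidableEq S] (hS : 2 ≤ Fintype.card S)
    (v : S → S → ℝ) (hv : IsLlull v)
    (hirr : ∀ x y : S, x ≠ y → 0 < iScore v x y) :
    ∃ φ ∈ simplexPos S, (∀ ψ ∈ simplexPos S, Zf v ψ ≤ Zf v φ) ∧ ZermeloEq v φ ∧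
      ∀ φ' ∈ simplexPos S,
        ((∀ ψ ∈ simplexPos S, Zf v ψ ≤ Zf v φ') ∨ ZermeloEq v φ') → φ' = φ := by
  obtain ⟨φ, hφ, hmax⟩ := exists_global_max hS hv hirr
  have hzer : ZermeloEq v φ := max_to_zermelo hv hφ hmax
  refine ⟨φ, hφ, hmax, hzer, ?_⟩
  intro φ' hφ' h
  rcases h with hmax' | hzer'
  · exact zermelo_unique hS hv hirr hφ hφ' hzer (max_to_zermelo hv hφ' hmax')
  · exact zermelo_unique hS hv hirr hφ hφ' hzer hzer'
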